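/- Under Gaussian noise, the negative log generalized likelihood ratio equals -log G(x,a) = (1 - C(x,a)²)·‖x - x̄·𝟙‖₂²/(2σ²), where G(x,a) = sup_{α,β} p(x | θ = α·a + β·𝟙) / sup_t p(x | θ = t) with Gaussian likelihood of variance σ². -/

import Mathlib

open Finset Real

noncomputable def emean {N : ℕ} (x : Fin N → ℝ) : ℝ := (∑ k, x k) / N

noncomputable def ncorr {N : ℕ} (x a : Fin N → ℝ) : ℝ :=
  |∑ k, (x k - emean x) * (a k - emean a)| /
    Real.sqrt ((∑ k, (x k - emean x) ^ 2) * (∑ k, (a k - emean a) ^ 2))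

noncomputable def gaussLik {N : ℕ} (σ : ℝ) (x θ : Fin N → ℝ) : ℝ :=
  ∏ k, (2 * Real.pi * σ ^ 2) ^ (-(1 : ℝ) / 2) *
    Real.exp (-(x k - θ k) ^ 2 / (2 * σ ^ 2))

/-- The Gaussian generalized likelihood ratio with affine contrast change. -/
noncomputable def gaussGLR {N : ℕ} (σ : ℝ) (x a : Fin N → ℝ) : ℝ :=
  (⨆ α : ℝ, ⨆ β : ℝ, gaussLik σ x (fun k => α * a k + β)) /
    (⨆ t : Fin N → ℝ, gaussLik σ x t)

lemma mySup {ι : Type*} [Nonempty ι] (f : ι → ℝ) (M : ℝ)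
    (h : ∀ i, f i ≤ M) (i₀ : ι) (h0 : f i₀ = M) : (⨆ i, f i) = M := by
  apply le_antisymm (ciSup_le h)
  calc M = f i₀ := h0.symm
    _ ≤ ⨆ i, f i := le_ciSup ⟨M, by rintro y ⟨i, rfl⟩; exact h i⟩ i₀

lemma gaussLik_eq {N : ℕ} (σ : ℝ) (x θ : Fin N → ℝ) :
    gaussLik σ x θ = ((2 * Real.pi * σ ^ 2) ^ (-(1:ℝ)/2)) ^ N *
      Real.exp (-(∑ k, (x k - θ k) ^ 2) / (2 * σ ^ 2)) := by
  unfold gaussLik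
  rw [Finset.prod_mul_distrib, Finset.prod_const, Finset.card_univ, Fintype.card_fin,
    ← Real.exp_sum]
  congr 1
  rw [← Finset.sum_div, ← Finset.sum_neg_distrib]

theorem neg_log_gauss_glr {N : ℕ} (σ : ℝ) (hσ : 0 < σ) (x a : Fin N → ℝ)
    (hx : 0 < ∑ k, (x k - emean x) ^ 2)
    (ha : 0 < ∑ k, (a k - emean a) ^ 2) :
    -Real.log (gaussGLR σ x a) =
      (1 - ncorr x a ^ 2) * (∑ k, (x k - emean x) ^ 2) / (2 * σ ^ 2) := by
  have hNpos : 0 < N := by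
    rcases Nat.eq_zero_or_pos N with h | h
    · subst h; simp at hx
    · exact h
  have hN : (0:ℝ) < N := by exact_mod_cast hNpos
  set Sxx := ∑ k, (x k - emean x) ^ 2 with hSxx
  set Saa := ∑ k, (a k - emean a) ^ 2 with hSaa
  set Sxa := ∑ k, (x k - emean x) * (a k - emean a) with hSxa
  have hsx : ∑ k, (x k - emean x) = 0 := by
    rw [Finset.sum_sub_distrib, Finset.sum_const, Finset.card_univ, Fintype.card_fin]
    rw [emean, nsmul_eq_mul]; field_simp; ring
  have hsa : ∑ k, (a k - emean a) = 0 := by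
    rw [Finset.sum_sub_distrib, Finset.sum_const, Finset.card_univ, Fintype.card_fin]
    rw [emean, nsmul_eq_mul]; field_simp; ring
  have hσ2 : (0:ℝ) < 2 * σ ^ 2 := by positivity
  set A := ((2 * Real.pi * σ ^ 2) ^ (-(1:ℝ)/2)) ^ N with hA
  have hApos : 0 < A := pow_pos (Real.rpow_pos_of_pos (by positivity) _) N
  have key : ∀ α β : ℝ, ∑ k, (x k - (α * a k + β)) ^ 2
      = Sxx - 2*α*Sxa + α^2*Saa + N*(emean x - α*emean a - β)^2 := by
    intro α β
    have h1 : ∑ k, (x k - (α * a k + β)) ^ 2 = ∑ k,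
        ((x k - emean x)^2 - (2*α)*((x k - emean x)*(a k - emean a))
          + (α^2)*(a k - emean a)^2
          + ((emean x - α*emean a - β)^2
            + (2*(emean x - α*emean a - β))*(x k - emean x)
            - (2*(emean x - α*emean a - β)*α)*(a k - emean a))) :=
      Finset.sum_congr rfl fun k _ => by ring
    rw [h1]
    simp only [Finset.sum_add_distrib, Finset.sum_sub_distrib, ← Finset.mul_sum,
      Finset.sum_const, Finset.card_univ, Fintype.card_fin, nsmul_eq_mul, hsx, hsa]
    rw [← hSxx, ← hSaa, ← hSxa]
    ring
  set Q : ℝ → ℝ := fun α => Sxx - 2*α*Sxa + α^2*Saa with hQ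
  set R : ℝ := Sxx - Sxa^2/Saa with hR
  -- inner sup over β
  have inner : ∀ α : ℝ, (⨆ β : ℝ, gaussLik σ x (fun k => α * a k + β))
      = A * Real.exp (-(Q α) / (2 * σ ^ 2)) := by
    intro α
    refine mySup _ _ ?_ (emean x - α * emean a) ?_
    · intro β
      rw [gaussLik_eq, ← hA]
      apply mul_le_mul_of_nonneg_left _ hApos.le
      apply Real.exp_le_exp.2
      gcongr
      · rw [key α β]
        have : (0:ℝ) ≤ (N:ℝ) * (emean x - α*emean a - β)^2 := by positivity
        simp only [hQ]; linarith
    · rw [gaussLik_eq, ← hA]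
      congr 2
      rw [key]
      simp only [hQ]; ring
  -- denominator
  have denom : (⨆ t : Fin N → ℝ, gaussLik σ x t) = A := by
    refine mySup _ _ ?_ x ?_
    · intro t
      rw [gaussLik_eq, ← hA]
      have h1 : Real.exp (-(∑ k, (x k - t k) ^ 2) / (2 * σ ^ 2)) ≤ 1 := by
        rw [Real.exp_le_one_iff]
        apply div_nonpos_of_nonpos_of_nonneg _ hσ2.le
        simp only [neg_nonpos]
        positivity
      calc A * Real.exp (-(∑ k, (x k - t k) ^ 2) / (2 * σ ^ 2)) ≤ A * 1 :=
            mul_le_mul_of_nonneg_left h1 hApos.le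
        _ = A := mul_one A
    · rw [gaussLik_eq, ← hA]
      simp
  -- outer sup over α
  have hQR : ∀ α : ℝ, R ≤ Q α := by
    intro α
    have hdiv : Sxa^2/Saa * Saa = Sxa^2 := div_mul_cancel₀ _ ha.ne'
    simp only [hQ, hR]
    nlinarith [sq_nonneg (α * Saa - Sxa), ha]
  have numer : (⨆ α : ℝ, ⨆ β : ℝ, gaussLik σ x (fun k => α * a k + β))
      = A * Real.exp (-R / (2 * σ ^ 2)) := by
    rw [iSup_congr inner]
    refine mySup _ _ ?_ (Sxa / Saa) ?_
    · intro α
      apply mul_le_mul_of_nonneg_left _ hApos.le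
      apply Real.exp_le_exp.2
      gcongr
      exact hQR α
    · have h2 : Q (Sxa / Saa) = R := by
        simp only [hQ, hR]
        field_simp
        ring
      rw [h2]
  have hGLR : gaussGLR σ x a = Real.exp (-R / (2 * σ ^ 2)) := by
    rw [gaussGLR, numer, denom, mul_comm, mul_div_assoc, div_self hApos.ne', mul_one]
  rw [hGLR, Real.log_exp]
  -- final algebra
  have hC2 : ncorr x a ^ 2 = Sxa^2 / (Sxx * Saa) := by
    rw [ncorr, div_pow, sq_abs, Real.sq_sqrt (by positivity : (0:ℝ) ≤ Sxx * Saa)]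
  rw [hC2, hR]
  field_simp
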